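/- arXiv:1103.2021 — 9 statements merged into one kernel-verified Lean document; each statement's English description precedes it below -/
import Mathlib

section
/- For any probability densities s, t with respect to λ and any ρ ∈ (0,1), C_ρ · d²(s,t) ≤ JKL_ρ(s,t), where d²(s,t) = ∫ (√s − √t)² dλ is the squared Hellinger distance and C_ρ = (1/ρ) min((1−ρ)/ρ, 1) (ln(1 + ρ/(1−ρ)) − ρ). -/
open MeasureTheory Real

/-- The elementary inequality `log t ≤ (t - t⁻¹)/2` for `t ≥ 1`. -/
lemma logM_aux {t : ℝ} (ht : 1 ≤ t) : Real.log t ≤ (t - t⁻¹)/2 := by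
  have h0 : (0:ℝ) < t := lt_of_lt_of_le one_pos ht
  have hd : ∀ y : ℝ, 0 < y → HasDerivAt (fun y : ℝ => (y - y⁻¹)/2 - Real.log y)
      ((1 - (-(y^(-2:ℤ))))/2 - y⁻¹) y := fun y hy0 =>
    (((hasDerivAt_id y).sub (hasDerivAt_inv (ne_of_gt hy0))).div_const 2).sub
      (Real.hasDerivAt_log (ne_of_gt hy0))
  have hmono : MonotoneOn (fun y : ℝ => (y - y⁻¹)/2 - Real.log y) (Set.Ici 1) := by
    apply monotoneOn_of_deriv_nonneg (convex_Ici 1)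
    · intro y hy
      simp only [Set.mem_Ici] at hy
      exact ((hd y (by linarith)).differentiableAt.continuousAt).continuousWithinAt
    · intro y hy
      rw [interior_Ici] at hy
      have hy1 := Set.mem_Ioi.mp hy
      exact ((hd y (by linarith)).differentiableAt).differentiableWithinAt
    · intro y hy
      rw [interior_Ici] at hy
      have hy1 := Set.mem_Ioi.mp hy
      have hy0 : (0:ℝ) < y := lt_trans one_pos hy1
      rw [(hd y hy0).deriv]
      have h2 : y^(-2:ℤ) = (y⁻¹)^2 := by
        rw [zpow_neg, inv_pow]; norm_cast
      have hinv : y⁻¹ * y = 1 := inv_mul_cancel₀ (ne_of_gt hy0)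
      rw [h2]
      nlinarith [sq_nonneg (1 - y⁻¹), inv_pos.mpr hy0]
  have := hmono (Set.self_mem_Ici) (Set.mem_Ici.mpr ht) ht
  simp only [inv_one, Real.log_one] at this
  norm_num at this
  linarith

/-- The key scalar inequality: `c(x-1)² ≤ ρx² - ρ - log(1-ρ+ρx²)` for `x ≥ 0`. -/
lemma keylemma_aux {ρ c x : ℝ} (hρ0 : 0 < ρ) (hρ1 : ρ < 1) (hx : 0 ≤ x)
    (hcL : c ≤ -Real.log (1-ρ) - ρ) (hchalf : c ≤ ρ/2)
    (hc1 : 2*c*(1-ρ) ≤ ρ^2) :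
    c*(x-1)^2 ≤ ρ*x^2 - ρ - Real.log (1-ρ+ρ*x^2) := by
  have hw : ∀ y : ℝ, 0 < 1-ρ+ρ*y^2 := fun y => by nlinarith [sq_nonneg y]
  rcases le_or_gt 1 x with h1 | h1
  · -- x ≥ 1 : algebraic, using logM_aux at w = 1-ρ+ρx²
    set w : ℝ := 1-ρ+ρ*x^2 with hwdef
    clear_value w
    have hw0 : 0 < w := by rw [hwdef]; exact hw x
    have hx21 : 0 ≤ x^2 - 1 := by nlinarith
    have hw1 : 1 ≤ w := by rw [hwdef]; nlinarith
    have hM := logM_aux hw1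
    have hinv : w * w⁻¹ = 1 := mul_inv_cancel₀ (ne_of_gt hw0)
    have hMw : 2*w*Real.log w ≤ w^2 - 1 := by
      nlinarith [mul_le_mul_of_nonneg_left hM (le_of_lt hw0), hinv]
    have h2 : c*(x-1)^2 * (2*w) ≤ (w-1)^2 := by
      have hcw : 2*c*w ≤ ρ^2*(x+1)^2 := by rw [hwdef]; nlinarith [sq_nonneg x]
      have he : w - 1 = ρ*(x^2-1) := by rw [hwdef]; ring
      nlinarith [sq_nonneg (x-1), mul_nonneg (sq_nonneg (x-1)) (le_of_lt hw0)]
    nlinarith [hMw, h2, hw0]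
  · -- x < 1 : monotonicity argument
    have hderiv : ∀ y : ℝ, HasDerivAt (fun y : ℝ => ρ*y^2 - ρ - Real.log (1-ρ+ρ*y^2) - c*(y-1)^2)
        (ρ*(2*y) - (ρ*(2*y))/(1-ρ+ρ*y^2) - c*(2*(y-1))) y := by
      intro y
      have d1 : HasDerivAt (fun y : ℝ => ρ*y^2) (ρ*(2*y)) y := by
        have h := (hasDerivAt_pow 2 y).const_mul ρ
        norm_num at h
        exact h
      have d2 : HasDerivAt (fun y : ℝ => 1-ρ+ρ*y^2) (ρ*(2*y)) y := by
        simpa using (d1.const_add (1-ρ))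
      have d3 : HasDerivAt (fun y : ℝ => Real.log (1-ρ+ρ*y^2)) ((ρ*(2*y))/(1-ρ+ρ*y^2)) y :=
        d2.log (ne_of_gt (hw y))
      have d4 : HasDerivAt (fun y : ℝ => c*(y-1)^2) (c*(2*(y-1))) y := by
        have h5 : HasDerivAt (fun y : ℝ => (y-1)^2) (2*(y-1)) y := by
          simpa using ((hasDerivAt_id y).sub_const 1).fun_pow 2
        exact h5.const_mul c
      exact ((d1.sub_const ρ).sub d3).sub d4
    have hcont : ∀ (S : Set ℝ), ContinuousOn (fun y : ℝ => ρ*y^2 - ρ - Real.log (1-ρ+ρ*y^2) - c*(y-1)^2) S :=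
      fun S y _ => ((hderiv y).differentiableAt.continuousAt).continuousWithinAt
    have hEeq : ∀ y : ℝ, ρ*(2*y) - (ρ*(2*y))/(1-ρ+ρ*y^2) - c*(2*(y-1))
        = 2*(y-1)*(ρ*(ρ-c)*y^2 + ρ^2*y - c*(1-ρ))/(1-ρ+ρ*y^2) := by
      intro y
      have := ne_of_gt (hw y)
      field_simp
      ring
    have hρc : 0 ≤ ρ - c := by linarith
    rcases le_or_gt 0 (ρ*(ρ-c)*x^2 + ρ^2*x - c*(1-ρ)) with hP | hP
    · -- P(x) ≥ 0 : h antitone on [x,1], h(x) ≥ h(1) = 0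
      have hanti : AntitoneOn (fun y : ℝ => ρ*y^2 - ρ - Real.log (1-ρ+ρ*y^2) - c*(y-1)^2) (Set.Icc x 1) := by
        apply antitoneOn_of_deriv_nonpos (convex_Icc x 1) (hcont _)
        · intro y _
          exact ((hderiv y).differentiableAt).differentiableWithinAt
        · intro y hy
          rw [interior_Icc] at hy
          rw [(hderiv y).deriv, hEeq y]
          apply div_nonpos_of_nonpos_of_nonneg _ (le_of_lt (hw y))
          have hxy : x ≤ y := le_of_lt hy.1
          have hPy : 0 ≤ ρ*(ρ-c)*y^2 + ρ^2*y - c*(1-ρ) := by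
            nlinarith [hP, mul_nonneg (mul_nonneg (le_of_lt hρ0) hρc)
              (mul_nonneg (sub_nonneg.mpr hxy) (by linarith : (0:ℝ) ≤ y + x)),
              mul_nonneg (sq_nonneg ρ) (sub_nonneg.mpr hxy)]
          nlinarith [mul_nonneg hPy (by linarith [hy.2] : (0:ℝ) ≤ 1 - y)]
      have h2 := hanti (Set.mem_Icc.mpr ⟨le_refl x, le_of_lt h1⟩)
        (Set.mem_Icc.mpr ⟨le_of_lt h1, le_refl 1⟩) (le_of_lt h1)
      have h2' : ρ*(1:ℝ)^2 - ρ - Real.log (1-ρ+ρ*(1:ℝ)^2) - c*((1:ℝ)-1)^2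
          ≤ ρ*x^2 - ρ - Real.log (1-ρ+ρ*x^2) - c*(x-1)^2 := h2
      have e1 : (1-ρ+ρ*(1:ℝ)^2) = 1 := by ring
      rw [e1, Real.log_one] at h2'
      nlinarith [h2']
    · -- P(x) < 0 : h monotone on [0,x], h(x) ≥ h(0) = L - c ≥ 0
      have hmono : MonotoneOn (fun y : ℝ => ρ*y^2 - ρ - Real.log (1-ρ+ρ*y^2) - c*(y-1)^2) (Set.Icc 0 x) := by
        apply monotoneOn_of_deriv_nonneg (convex_Icc 0 x) (hcont _)
        · intro y _
          exact ((hderiv y).differentiableAt).differentiableWithinAt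
        · intro y hy
          rw [interior_Icc] at hy
          rw [(hderiv y).deriv, hEeq y]
          apply div_nonneg _ (le_of_lt (hw y))
          have hxy : y ≤ x := le_of_lt hy.2
          have hy0 : 0 ≤ y := le_of_lt hy.1
          have hPy : ρ*(ρ-c)*y^2 + ρ^2*y - c*(1-ρ) ≤ 0 := by
            nlinarith [hP, mul_nonneg (mul_nonneg (le_of_lt hρ0) hρc)
              (mul_nonneg (sub_nonneg.mpr hxy) (by linarith : (0:ℝ) ≤ x + y)),
              mul_nonneg (sq_nonneg ρ) (sub_nonneg.mpr hxy)]
          nlinarith [mul_nonneg (by linarith : (0:ℝ) ≤ -(ρ*(ρ-c)*y^2 + ρ^2*y - c*(1-ρ)))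
            (by linarith [hy.2, h1] : (0:ℝ) ≤ 1 - y)]
      have h2 := hmono (Set.mem_Icc.mpr ⟨le_refl 0, hx⟩) (Set.mem_Icc.mpr ⟨hx, le_refl x⟩) hx
      have h2' : ρ*(0:ℝ)^2 - ρ - Real.log (1-ρ+ρ*(0:ℝ)^2) - c*((0:ℝ)-1)^2
          ≤ ρ*x^2 - ρ - Real.log (1-ρ+ρ*x^2) - c*(x-1)^2 := h2
      have e1 : (1-ρ+ρ*(0:ℝ)^2) = 1-ρ := by ring
      rw [e1] at h2'
      nlinarith [h2']

/-- Pointwise inequality for densities. -/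
lemma ptwise_aux {ρ c : ℝ} (hρ0 : 0 < ρ) (hρ1 : ρ < 1)
    (hcL : c ≤ -Real.log (1-ρ) - ρ) (hchalf : c ≤ ρ/2) (hc1 : 2*c*(1-ρ) ≤ ρ^2)
    {a b : ℝ} (ha : 0 ≤ a) (hb : 0 ≤ b) :
    c * (Real.sqrt a - Real.sqrt b)^2
      ≤ a * Real.log (a / ((1-ρ)*a + ρ*b)) + ρ*(b-a) := by
  rcases eq_or_lt_of_le ha with h0 | h0
  · -- a = 0
    rw [← h0]
    simp only [Real.sqrt_zero, zero_mul, zero_sub, zero_add, zero_div]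
    rw [neg_sq, Real.sq_sqrt hb]
    nlinarith [hb]
  · -- a > 0
    set x : ℝ := Real.sqrt b / Real.sqrt a with hxdef
    have hsa : 0 < Real.sqrt a := Real.sqrt_pos.mpr h0
    have hx : 0 ≤ x := div_nonneg (Real.sqrt_nonneg b) (le_of_lt hsa)
    have hxsq : a * x^2 = b := by
      rw [hxdef, div_pow, Real.sq_sqrt ha, Real.sq_sqrt hb]
      field_simp
    have hax : a * x = Real.sqrt a * Real.sqrt b := by
      rw [hxdef]
      field_simp
      linear_combination (-Real.sqrt b) * Real.sq_sqrt ha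
    have hm : (0:ℝ) < (1-ρ)*a + ρ*b := by nlinarith
    have hwx : 1-ρ+ρ*x^2 = ((1-ρ)*a+ρ*b)/a := by
      field_simp
      nlinarith [hxsq]
    have hlog : Real.log (1-ρ+ρ*x^2) = Real.log ((1-ρ)*a+ρ*b) - Real.log a := by
      rw [hwx, Real.log_div (ne_of_gt hm) (ne_of_gt h0)]
    have hloggoal : Real.log (a/((1-ρ)*a+ρ*b)) = Real.log a - Real.log ((1-ρ)*a+ρ*b) :=
      Real.log_div (ne_of_gt h0) (ne_of_gt hm)
    have hsq : a*(x-1)^2 = (Real.sqrt a - Real.sqrt b)^2 := by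
      have e1 : (Real.sqrt a - Real.sqrt b)^2
          = a - 2*(Real.sqrt a * Real.sqrt b) + b := by
        rw [sub_sq, Real.sq_sqrt ha, Real.sq_sqrt hb]; ring
      rw [e1, ← hax, ← hxsq]; ring
    have key := keylemma_aux hρ0 hρ1 hx hcL hchalf hc1
    have hmul := mul_le_mul_of_nonneg_left key (le_of_lt h0)
    rw [hlog] at hmul
    rw [hloggoal]
    nlinarith [hmul, hsq, hxsq]

/-- `C_ρ · d²(s,t) ≤ JKL_ρ(s,t)` where `d²` is the squared Hellinger
distance and `C_ρ = (1/ρ) min((1-ρ)/ρ, 1) (ln(1 + ρ/(1-ρ)) - ρ)`. -/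
theorem hellinger_le_jkl {α : Type*} [MeasurableSpace α] (μ : Measure α) [SigmaFinite μ]
    (s t : α → ℝ) (ρ : ℝ) (hρ : ρ ∈ Set.Ioo (0:ℝ) 1)
    (hs : ∀ᵐ x ∂μ, 0 ≤ s x) (ht : ∀ᵐ x ∂μ, 0 ≤ t x)
    (hs1 : ∫ x, s x ∂μ = 1) (ht1 : ∫ x, t x ∂μ = 1)
    (hHel : Integrable (fun x => (Real.sqrt (s x) - Real.sqrt (t x))^2) μ)
    (hJKL : Integrable (fun x => s x * Real.log (s x / ((1 - ρ) * s x + ρ * t x))) μ) :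
    (1 / ρ) * min ((1 - ρ) / ρ) 1 * (Real.log (1 + ρ / (1 - ρ)) - ρ) *
        ∫ x, (Real.sqrt (s x) - Real.sqrt (t x))^2 ∂μ
      ≤ (1 / ρ) * ∫ x, s x * Real.log (s x / ((1 - ρ) * s x + ρ * t x)) ∂μ := by
  obtain ⟨hρ0, hρ1⟩ := hρ
  have h1ρ : (0:ℝ) < 1 - ρ := by linarith
  -- rewrite the logarithm in the constant
  have hlogρ : Real.log (1 + ρ/(1-ρ)) = -Real.log (1-ρ) := by
    rw [show (1 + ρ/(1-ρ)) = (1-ρ)⁻¹ by field_simp; ring, Real.log_inv]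
  -- the constant c and its properties
  set c : ℝ := min ((1-ρ)/ρ) 1 * (-Real.log (1-ρ) - ρ) with hcdef
  have hL0 : 0 ≤ -Real.log (1-ρ) - ρ := by
    have := Real.log_le_sub_one_of_pos h1ρ
    linarith
  have hm1 : min ((1-ρ)/ρ) 1 ≤ 1 := min_le_right _ _
  have hcL : c ≤ -Real.log (1-ρ) - ρ := by
    rw [hcdef]
    exact mul_le_of_le_one_left hL0 hm1
  have hF1 : -Real.log (1-ρ) - ρ ≤ ρ^2/(2*(1-ρ)) := by
    have hv : 0 < (1-ρ)⁻¹ := inv_pos.mpr h1ρ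
    have hinv : (1-ρ)*(1-ρ)⁻¹ = 1 := mul_inv_cancel₀ (ne_of_gt h1ρ)
    have ht1' : 1 ≤ (1-ρ)⁻¹ := by nlinarith
    have hM := logM_aux ht1'
    rw [inv_inv, Real.log_inv] at hM
    have e : ((1-ρ)⁻¹ - (1-ρ))/2 = ρ + ρ^2/(2*(1-ρ)) := by
      field_simp
      ring
    linarith
  have hcF : c ≤ ρ^2/(2*(1-ρ)) := le_trans hcL hF1
  have hchalf : c ≤ ρ/2 := by
    rcases le_total ρ (1/2) with h | h
    · have e : ρ^2/(2*(1-ρ)) ≤ ρ^2 := div_le_self (sq_nonneg ρ) (by linarith)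
      nlinarith [hcF]
    · have h3 : c ≤ (1-ρ)/ρ * (-Real.log (1-ρ) - ρ) := by
        rw [hcdef]
        exact mul_le_mul_of_nonneg_right (min_le_left _ _) hL0
      have e2 : (1-ρ)/ρ * (ρ^2/(2*(1-ρ))) = ρ/2 := by
        field_simp
      have h4 : (1-ρ)/ρ * (-Real.log (1-ρ) - ρ) ≤ ρ/2 := by
        rw [← e2]
        exact mul_le_mul_of_nonneg_left hF1 (by positivity)
      linarith
  have hc1 : 2*c*(1-ρ) ≤ ρ^2 := by
    have e : ρ^2/(2*(1-ρ)) * (2*(1-ρ)) = ρ^2 := by field_simp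
    nlinarith [hcF, h1ρ]
  -- integrability of s and t
  have hs' : Integrable s μ := by
    by_contra hcon
    rw [integral_undef hcon] at hs1
    norm_num at hs1
  have ht' : Integrable t μ := by
    by_contra hcon
    rw [integral_undef hcon] at ht1
    norm_num at ht1
  -- a.e. pointwise inequality
  have hae : ∀ᵐ x ∂μ, c * (Real.sqrt (s x) - Real.sqrt (t x))^2
      ≤ s x * Real.log (s x / ((1-ρ)*(s x) + ρ*(t x))) + ρ*(t x - s x) := by
    filter_upwards [hs, ht] with x hsx htx
    exact ptwise_aux hρ0 hρ1 hcL hchalf hc1 hsx htx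
  have hts : Integrable (fun x => ρ*(t x - s x)) μ := by
    exact (ht'.sub hs').const_mul ρ
  have hint2 : Integrable (fun x => s x * Real.log (s x / ((1-ρ)*(s x) + ρ*(t x)))
      + ρ*(t x - s x)) μ := hJKL.add hts
  have hmono := integral_mono_ae (hHel.const_mul c) hint2 hae
  rw [integral_const_mul] at hmono
  rw [integral_add hJKL hts, integral_const_mul,
    integral_sub ht' hs', ht1, hs1] at hmono
  norm_num at hmono
  -- conclude
  rw [hlogρ]
  have hfinal := mul_le_mul_of_nonneg_left hmono (le_of_lt (one_div_pos.mpr hρ0))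
  calc (1/ρ) * min ((1-ρ)/ρ) 1 * (-Real.log (1-ρ) - ρ) *
        ∫ x, (Real.sqrt (s x) - Real.sqrt (t x))^2 ∂μ
      = (1/ρ) * (c * ∫ x, (Real.sqrt (s x) - Real.sqrt (t x))^2 ∂μ) := by
        rw [hcdef]; ring
    _ ≤ (1/ρ) * ∫ x, s x * Real.log (s x / ((1-ρ)*(s x) + ρ*(t x))) ∂μ := hfinal
end

section
/- If s and t are probability densities with respect to λ with s dλ ≪ t dλ and ‖s/t‖_∞ < ∞, then d²(s,t) ≤ KL(s,t) ≤ (2 + ln‖s/t‖_∞) · d²(s,t), where d²(s,t) is the squared Hellinger distance. -/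
open MeasureTheory Real


-- Lemma A: u - 1 ≤ u * log u for u > 0
lemma aux_sub_one_le_mul_log {u : ℝ} (hu : 0 < u) : u - 1 ≤ u * Real.log u := by
  have h := Real.one_sub_inv_le_log_of_pos hu
  have := mul_le_mul_of_nonneg_left h (le_of_lt hu)
  have hinv : u * u⁻¹ = 1 := mul_inv_cancel₀ (ne_of_gt hu)
  nlinarith

-- G lemma: for u ≥ 1
lemma aux_G (u : ℝ) (hu : 1 ≤ u) :
    2*u^2*Real.log u - u^2 + 1 ≤ (2 + 2*Real.log u)*(u-1)^2 := by
  set G : ℝ → ℝ := fun v => (2 + 2*Real.log v)*(v-1)^2 - (2*v^2*Real.log v - v^2 + 1) with hG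
  have hd : ∀ v ∈ Set.Ici (1:ℝ), HasDerivAt G
      (2*v⁻¹*(v-1)^2 + (2 + 2*Real.log v)*(2*(v-1)) - (2*(2*v)*Real.log v + 2*v^2*v⁻¹ - 2*v)) v := by
    intro v hv
    have hv0 : v ≠ 0 := by simp at hv; linarith
    have hlog : HasDerivAt Real.log v⁻¹ v := Real.hasDerivAt_log hv0
    have ha : HasDerivAt (fun w => 2 + 2*Real.log w) (2*v⁻¹) v := (hlog.const_mul 2).const_add 2
    have hb : HasDerivAt (fun w : ℝ => (w-1)^2) (2*(v-1)) v := by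
      simpa using ((hasDerivAt_id v).sub_const 1).fun_pow 2
    have hc : HasDerivAt (fun w : ℝ => 2*w^2) (2*(2*v)) v := by
      simpa using (hasDerivAt_pow 2 v).const_mul 2
    have hcd : HasDerivAt (fun w : ℝ => 2*w^2*Real.log w) (2*(2*v)*Real.log v + 2*v^2*v⁻¹) v :=
      hc.mul hlog
    have he : HasDerivAt (fun w : ℝ => 2*w^2*Real.log w - w^2 + 1)
        (2*(2*v)*Real.log v + 2*v^2*v⁻¹ - 2*v) v := by
      have := (hcd.sub ((hasDerivAt_pow 2 v))).add_const 1
      simpa using this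
    exact (ha.mul hb).sub he
  have hmono : MonotoneOn G (Set.Ici (1:ℝ)) := by
    apply monotoneOn_of_deriv_nonneg (convex_Ici 1)
    · exact fun v hv => ((hd v hv).continuousAt).continuousWithinAt
    · intro v hv
      rw [interior_Ici] at hv
      exact ((hd v (Set.mem_Ici.2 (le_of_lt hv))).differentiableAt).differentiableWithinAt
    · intro v hv
      rw [interior_Ici] at hv
      have hv1 : 1 < v := hv
      have hv0 : 0 < v := lt_trans one_pos hv1
      rw [((hd v (Set.mem_Ici.2 (le_of_lt hv1))).deriv)]
      have hlogle : Real.log v ≤ v - 1 := Real.log_le_sub_one_of_pos hv0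
      have hinv : v * v⁻¹ = 1 := mul_inv_cancel₀ (ne_of_gt hv0)
      have hinvpos : 0 < v⁻¹ := inv_pos.2 hv0
      nlinarith [mul_nonneg (le_of_lt hinvpos) (sq_nonneg (v-1)), Real.log_nonneg (le_of_lt hv1)]
  have h0 : G 1 ≤ G u := hmono (Set.mem_Ici.2 le_rfl) (Set.mem_Ici.2 hu) hu
  have : G 1 = 0 := by simp [hG]
  rw [this] at h0
  simp only [hG] at h0
  linarith

-- F lemma : for 0 < u ≤ 1
lemma aux_F (u : ℝ) (hu0 : 0 < u) (hu1 : u ≤ 1) :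
    2*u^2*Real.log u - u^2 + 1 ≤ 2*(u-1)^2 := by
  set F : ℝ → ℝ := fun v => 2*(v-1)^2 - 2*v^2*Real.log v + v^2 - 1 with hF
  have hd : ∀ v ∈ Set.Icc u 1, HasDerivAt F
      (2*(2*(v-1)) - (2*(2*v)*Real.log v + 2*v^2*v⁻¹) + 2*v) v := by
    intro v hv
    have hv0 : 0 < v := lt_of_lt_of_le hu0 hv.1
    have hlog : HasDerivAt Real.log v⁻¹ v := Real.hasDerivAt_log (ne_of_gt hv0)
    have hb : HasDerivAt (fun w : ℝ => 2*(w-1)^2) (2*(2*(v-1))) v := by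
      simpa using (((hasDerivAt_id v).sub_const 1).pow 2).const_mul 2
    have hc : HasDerivAt (fun w : ℝ => 2*w^2) (2*(2*v)) v := by
      simpa using (hasDerivAt_pow 2 v).const_mul 2
    have hcd : HasDerivAt (fun w : ℝ => 2*w^2*Real.log w) (2*(2*v)*Real.log v + 2*v^2*v⁻¹) v :=
      hc.mul hlog
    have hsq : HasDerivAt (fun w : ℝ => w^2) (2*v) v := by simpa using hasDerivAt_pow 2 v
    exact ((hb.sub hcd).add hsq).sub_const 1
  have hanti : AntitoneOn F (Set.Icc u 1) := by
    apply antitoneOn_of_deriv_nonpos (convex_Icc u 1)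
    · exact fun v hv => ((hd v hv).continuousAt).continuousWithinAt
    · intro v hv
      have hv' := interior_subset hv
      exact ((hd v hv').differentiableAt).differentiableWithinAt
    · intro v hv
      have hv' := interior_subset hv
      rw [((hd v hv').deriv)]
      have hv0 : 0 < v := lt_of_lt_of_le hu0 hv'.1
      have hA := aux_sub_one_le_mul_log hv0
      have hinv : v * v⁻¹ = 1 := mul_inv_cancel₀ (ne_of_gt hv0)
      nlinarith
  have h0 : F 1 ≤ F u := hanti (Set.mem_Icc.2 ⟨le_rfl, hu1⟩) (Set.mem_Icc.2 ⟨hu1, le_rfl⟩) hu1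
  have h1 : F 1 = 0 := by simp [hF]
  rw [h1] at h0
  simp only [hF] at h0
  linarith

-- lower bound in x form
lemma low_x (x : ℝ) (hx : 0 ≤ x) :
    (Real.sqrt x - 1)^2 ≤ x * Real.log x - x + 1 := by
  rcases eq_or_lt_of_le hx with h | hx0
  · simp [← h]
  · set u := Real.sqrt x with hu
    have hu0 : 0 < u := Real.sqrt_pos.2 hx0
    have hux : u^2 = x := Real.sq_sqrt hx
    have hlog : Real.log x = 2 * Real.log u := by
      rw [hu, Real.log_sqrt hx]; ring
    have hA := aux_sub_one_le_mul_log hu0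
    rw [hlog, ← hux]
    nlinarith
lemma up_x (x M : ℝ) (hx : 0 ≤ x) (hxM : x ≤ M) (hM : 1 ≤ M) :
    x * Real.log x - x + 1 ≤ (2 + Real.log M) * (Real.sqrt x - 1)^2 := by
  have hlogM : 0 ≤ Real.log M := Real.log_nonneg hM
  have hsq : 0 ≤ (Real.sqrt x - 1)^2 := sq_nonneg _
  rcases eq_or_lt_of_le hx with h | hx0
  · simp [← h]; nlinarith
  set u := Real.sqrt x with hu
  have hu0 : 0 < u := Real.sqrt_pos.2 hx0
  have hux : u^2 = x := Real.sq_sqrt hx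
  have hlog : Real.log x = 2 * Real.log u := by rw [hu, Real.log_sqrt hx]; ring
  rcases le_total x 1 with h1 | h1
  · have hu1 : u ≤ 1 := by
      rw [hu]; calc Real.sqrt x ≤ Real.sqrt 1 := Real.sqrt_le_sqrt h1
        _ = 1 := Real.sqrt_one
    have := aux_F u hu0 hu1
    rw [hlog, ← hux]
    nlinarith
  · have hu1 : 1 ≤ u := by
      rw [hu]; calc (1:ℝ) = Real.sqrt 1 := Real.sqrt_one.symm
        _ ≤ Real.sqrt x := Real.sqrt_le_sqrt h1
    have hG := aux_G u hu1
    have hlx : Real.log x ≤ Real.log M := Real.log_le_log hx0 hxM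
    rw [hlog, ← hux]
    rw [hlog] at hlx
    nlinarith

lemma pt_both (a b M : ℝ) (ha : 0 ≤ a) (hb : 0 ≤ b) (hab : b = 0 → a = 0)
    (hM : a ≤ M * b) (hM1 : 1 ≤ M) :
    (Real.sqrt a - Real.sqrt b)^2 ≤ a * Real.log (a/b) - a + b ∧
    a * Real.log (a/b) - a + b ≤ (2 + Real.log M) * (Real.sqrt a - Real.sqrt b)^2 := by
  rcases eq_or_lt_of_le hb with h | hb0
  · have ha0 : a = 0 := hab h.symm
    subst ha0; rw [← h]; constructor <;> simp
  · have hb' : (0:ℝ) ≤ b := le_of_lt hb0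
    set x := a / b with hx
    have hx0 : 0 ≤ x := div_nonneg ha hb'
    have hax : a = b * x := by rw [hx, mul_div_assoc', mul_div_cancel_left₀ a (ne_of_gt hb0)]
    have hxM : x ≤ M := (div_le_iff₀ hb0).2 (by linarith)
    have hsq : (Real.sqrt a - Real.sqrt b)^2 = b * (Real.sqrt x - 1)^2 := by
      rw [hax, Real.sqrt_mul hb']
      have h2 : (Real.sqrt b * Real.sqrt x - Real.sqrt b)^2
          = (Real.sqrt b)^2 * (Real.sqrt x - 1)^2 := by ring
      rw [h2, Real.sq_sqrt hb']
    have hRHS : a * Real.log x - a + b = b * (x * Real.log x - x + 1) := by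
      rw [hax]; ring
    constructor
    · rw [hsq, hRHS]
      exact mul_le_mul_of_nonneg_left (low_x x hx0) hb'
    · rw [hsq, hRHS]
      have h3 : b * (x * Real.log x - x + 1)
          ≤ b * ((2 + Real.log M) * (Real.sqrt x - 1)^2) :=
        mul_le_mul_of_nonneg_left (up_x x M hx0 hxM hM1) hb'
      calc b * (x * Real.log x - x + 1)
          ≤ b * ((2 + Real.log M) * (Real.sqrt x - 1)^2) := h3
        _ = (2 + Real.log M) * (b * (Real.sqrt x - 1)^2) := by ring

/-- If `s dμ ≪ t dμ` and `‖s/t‖_∞ < ∞`, then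
`d²(s,t) ≤ KL(s,t) ≤ (2 + ln‖s/t‖_∞) d²(s,t)`. -/
theorem hellinger_kl_ratio_bound {α : Type*} [MeasurableSpace α] (μ : Measure α)
    [SigmaFinite μ] (s t : α → ℝ)
    (hs : ∀ᵐ x ∂μ, 0 ≤ s x) (ht : ∀ᵐ x ∂μ, 0 ≤ t x)
    (hs1 : ∫ x, s x ∂μ = 1) (ht1 : ∫ x, t x ∂μ = 1)
    (hac : ∀ᵐ x ∂μ, t x = 0 → s x = 0)
    (hbdd : Filter.IsBoundedUnder (· ≤ ·) (MeasureTheory.ae μ) (fun x => s x / t x))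
    (hKL : Integrable (fun x => s x * Real.log (s x / t x)) μ)
    (hHel : Integrable (fun x => (Real.sqrt (s x) - Real.sqrt (t x))^2) μ) :
    ∫ x, (Real.sqrt (s x) - Real.sqrt (t x))^2 ∂μ ≤ ∫ x, s x * Real.log (s x / t x) ∂μ ∧
    ∫ x, s x * Real.log (s x / t x) ∂μ ≤
      (2 + Real.log (essSup (fun x => s x / t x) μ)) *
        ∫ x, (Real.sqrt (s x) - Real.sqrt (t x))^2 ∂μ := by
  set M := essSup (fun x => s x / t x) μ with hMdef
  have hints : Integrable s μ := by
    by_contra h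
    rw [integral_undef h] at hs1
    exact one_ne_zero hs1.symm
  have hintt : Integrable t μ := by
    by_contra h
    rw [integral_undef h] at ht1
    exact one_ne_zero ht1.symm
  have hleM : ∀ᵐ x ∂μ, s x / t x ≤ M := eventually_le_limsup hbdd
  have hsMt : ∀ᵐ x ∂μ, s x ≤ M * t x := by
    filter_upwards [hleM, ht, hac] with x h1 h2 h3
    rcases eq_or_lt_of_le h2 with h0 | h0
    · rw [h3 h0.symm, ← h0]; simp
    · exact (div_le_iff₀ h0).1 h1
  have hM1 : 1 ≤ M := by
    have h := integral_mono_ae hints (hintt.const_mul M) hsMt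
    rw [hs1, MeasureTheory.integral_const_mul, ht1, mul_one] at h
    exact h
  set g : α → ℝ := fun x => s x * Real.log (s x / t x) - s x + t x with hg
  have hg_int : Integrable g μ := (hKL.sub hints).add hintt
  have hg_eq : ∫ x, g x ∂μ = ∫ x, s x * Real.log (s x / t x) ∂μ := by
    have hA : ∫ x, (s x * Real.log (s x / t x) - s x) + t x ∂μ
        = ∫ x, (s x * Real.log (s x / t x) - s x) ∂μ + ∫ x, t x ∂μ :=
      integral_add (hKL.sub hints) hintt
    have hB : ∫ x, (s x * Real.log (s x / t x) - s x) ∂μ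
        = ∫ x, s x * Real.log (s x / t x) ∂μ - ∫ x, s x ∂μ :=
      integral_sub hKL hints
    calc ∫ x, g x ∂μ
        = ∫ x, (s x * Real.log (s x / t x) - s x) + t x ∂μ := rfl
      _ = ∫ x, s x * Real.log (s x / t x) ∂μ - ∫ x, s x ∂μ + ∫ x, t x ∂μ := by rw [hA, hB]
      _ = ∫ x, s x * Real.log (s x / t x) ∂μ := by rw [hs1, ht1]; ring
  have hae := (hs.and (ht.and (hac.and hsMt))).mono
    (fun x ⟨h1, h2, h3, h4⟩ => pt_both (s x) (t x) M h1 h2 h3 h4 hM1)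
  constructor
  · calc ∫ x, (Real.sqrt (s x) - Real.sqrt (t x))^2 ∂μ
        ≤ ∫ x, g x ∂μ := integral_mono_ae hHel hg_int (hae.mono fun x hx => hx.1)
      _ = ∫ x, s x * Real.log (s x / t x) ∂μ := hg_eq
  · calc ∫ x, s x * Real.log (s x / t x) ∂μ = ∫ x, g x ∂μ := hg_eq.symm
      _ ≤ ∫ x, (2 + Real.log M) * (Real.sqrt (s x) - Real.sqrt (t x))^2 ∂μ :=
          integral_mono_ae hg_int (hHel.const_mul _) (hae.mono fun x hx => hx.2)
      _ = (2 + Real.log M) * ∫ x, (Real.sqrt (s x) - Real.sqrt (t x))^2 ∂μ :=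
          MeasureTheory.integral_const_mul _ _
end

section
/- For all real x ≥ 0 and all M ≥ 1 with x ≤ M, one has (√x − 1)² ≤ x ln x − x + 1 ≤ (2 + ln M)(√x − 1)², where x ln x is interpreted as 0 at x = 0. -/
open Real

lemma log_ge_one_sub_inv {s : ℝ} (hs : 0 < s) : 1 - s⁻¹ ≤ Real.log s := by
  have h := Real.log_le_sub_one_of_pos (x := s⁻¹) (by positivity)
  rw [Real.log_inv] at h
  linarith

lemma lemA {s : ℝ} (hs : 1 ≤ s) : 2 * (s - 1) ≤ (s + 1) * Real.log s := by
  have hd : ∀ y : ℝ, 0 < y → HasDerivAt (fun s : ℝ => (s + 1) * Real.log s - 2 * (s - 1))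
      (1 * Real.log y + (y + 1) * y⁻¹ - 2 * 1) y := fun y hy0 =>
    (((hasDerivAt_id y).add_const 1).mul (Real.hasDerivAt_log hy0.ne')).sub
      (((hasDerivAt_id y).sub_const 1).const_mul 2)
  have key : MonotoneOn (fun s : ℝ => (s + 1) * Real.log s - 2 * (s - 1)) (Set.Ici 1) := by
    apply monotoneOn_of_deriv_nonneg (convex_Ici 1)
    · apply ContinuousOn.sub
      · exact (continuousOn_id.add continuousOn_const).mul
          (Real.continuousOn_log.mono (by intro y hy; simp at hy ⊢; intro h; linarith))
      · fun_prop
    · intro y hy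
      rw [interior_Ici] at hy
      exact ((hd y (by linarith [Set.mem_Ioi.1 hy])).differentiableAt).differentiableWithinAt
    · intro y hy
      rw [interior_Ici] at hy
      have hy1 : (1:ℝ) < y := hy
      have hy0 : (0:ℝ) < y := by linarith
      rw [(hd y hy0).deriv]
      have := log_ge_one_sub_inv hy0
      have hinv : y⁻¹ * y = 1 := inv_mul_cancel₀ hy0.ne'
      nlinarith [this, hinv]
  have h0 := key (Set.self_mem_Ici) (Set.mem_Ici.2 hs) hs
  simp at h0
  linarith

lemma lemB {t : ℝ} (ht : 1 ≤ t) : 2 * t * Real.log t ≤ t ^ 2 - 1 := by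
  have hd : ∀ y : ℝ, 0 < y → HasDerivAt (fun t : ℝ => t ^ 2 - 1 - 2 * t * Real.log t)
      (2 * y ^ 1 - 0 - ((2 * 1) * Real.log y + (2 * y) * y⁻¹)) y := by
    intro y hy0
    have h1 : HasDerivAt (fun t : ℝ => t ^ 2 - 1) (2 * y ^ 1 - 0) y := by
      simpa using ((hasDerivAt_pow 2 y).sub_const 1)
    have h2 : HasDerivAt (fun t : ℝ => 2 * t * Real.log t)
        ((2 * 1) * Real.log y + (2 * y) * y⁻¹) y := by
      exact (((hasDerivAt_id y).const_mul 2).mul (Real.hasDerivAt_log hy0.ne'))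
    exact h1.sub h2
  have key : MonotoneOn (fun t : ℝ => t ^ 2 - 1 - 2 * t * Real.log t) (Set.Ici 1) := by
    apply monotoneOn_of_deriv_nonneg (convex_Ici 1)
    · apply ContinuousOn.sub
      · fun_prop
      · exact (continuousOn_const.mul continuousOn_id).mul
          (Real.continuousOn_log.mono (by intro y hy; simp at hy ⊢; intro h; linarith))
    · intro y hy
      rw [interior_Ici] at hy
      exact ((hd y (by linarith [Set.mem_Ioi.1 hy])).differentiableAt).differentiableWithinAt
    · intro y hy
      rw [interior_Ici] at hy
      have hy1 : (1:ℝ) < y := hy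
      have hy0 : (0:ℝ) < y := by linarith
      rw [(hd y hy0).deriv]
      have hlog := Real.log_le_sub_one_of_pos hy0
      have hinv : y⁻¹ * y = 1 := inv_mul_cancel₀ hy0.ne'
      nlinarith [hlog, hinv]
  have h0 := key (Set.self_mem_Ici) (Set.mem_Ici.2 ht) ht
  simp at h0
  nlinarith [h0]

/-- For all `x ≥ 0`, `M ≥ 1` with `x ≤ M`,
`(√x − 1)² ≤ x ln x − x + 1 ≤ (2 + ln M)(√x − 1)²` (with `x ln x = 0` at `x = 0`). -/
theorem sqrt_sub_one_sq_le_xlogx (x M : ℝ) (hx : 0 ≤ x) (hM : 1 ≤ M) (hxM : x ≤ M) :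
    (Real.sqrt x - 1)^2 ≤ x * Real.log x - x + 1 ∧
    x * Real.log x - x + 1 ≤ (2 + Real.log M) * (Real.sqrt x - 1)^2 := by
  have hlogM : 0 ≤ Real.log M := Real.log_nonneg hM
  rcases eq_or_lt_of_le hx with h0 | hx0
  · rw [← h0]
    norm_num
    nlinarith [hlogM]
  · set t := Real.sqrt x with ht
    have ht0 : 0 < t := Real.sqrt_pos.2 hx0
    have ht2 : t ^ 2 = x := Real.sq_sqrt hx
    have hlogx : Real.log x = 2 * Real.log t := by
      rw [← ht2, Real.log_pow]; push_cast; ring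
    have hlow : 1 - t⁻¹ ≤ Real.log t := log_ge_one_sub_inv ht0
    have hinv : t⁻¹ * t = 1 := inv_mul_cancel₀ ht0.ne'
    constructor
    · -- lower bound
      have h1 : t - 1 ≤ t * Real.log t := by nlinarith [hlow, hinv]
      rw [hlogx, ← ht2]
      nlinarith [mul_le_mul_of_nonneg_left h1 (by positivity : (0:ℝ) ≤ 2 * t)]
    · -- upper bound
      rcases le_total t 1 with htle | htge
      · -- x ≤ 1 case
        have hA := lemA (s := t⁻¹) ((one_le_inv₀ ht0).2 htle)
        rw [Real.log_inv] at hA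
        -- hA : 2 * (t⁻¹ - 1) ≤ (t⁻¹ + 1) * (-log t)
        have hL : (1 + t) * Real.log t ≤ 2 * (t - 1) := by
          have := mul_le_mul_of_nonneg_left hA ht0.le
          have ht1 : t * t⁻¹ = 1 := mul_inv_cancel₀ ht0.ne'
          nlinarith [this, ht1]
        rw [hlogx, ← ht2]
        nlinarith [mul_le_mul_of_nonneg_left hL (by positivity : (0:ℝ) ≤ 2 * t^2),
          mul_nonneg hlogM (sq_nonneg (t - 1)),
          mul_nonneg (sub_nonneg.2 htle) (sq_nonneg (t - 1))]
      · -- x ≥ 1 case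
        have hB := lemB htge
        have hlt0 : 0 ≤ Real.log t := Real.log_nonneg htge
        have hMx : 2 * Real.log t ≤ Real.log M := by
          rw [← hlogx]; exact Real.log_le_log hx0 hxM
        have key : 2 * (2 * t - 1) * Real.log t ≤ (t - 1) * (3 * t - 1) := by
          nlinarith [mul_le_mul_of_nonneg_left hB (by linarith : (0:ℝ) ≤ 2 * t - 1),
            pow_le_pow_left₀ (by linarith : (0:ℝ) ≤ t - 1) (le_refl (t-1)) 3,
            mul_nonneg (mul_nonneg (by linarith : (0:ℝ) ≤ t - 1) (by linarith : (0:ℝ) ≤ t - 1)) (by linarith : (0:ℝ) ≤ t - 1),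
            ht0]
        rw [hlogx, ← ht2]
        nlinarith [key, mul_nonneg (sub_nonneg.2 hMx) (sq_nonneg (t - 1)),
          sq_nonneg (t - 1), hlt0]
end

section
/- The function Φ(x) = (1+x) ln(1+x) − x satisfies: Φ(x)/x² is non-increasing on (−1, +∞) (with value 1/2 at 0 by continuity). Consequently, for ρ ∈ (0,1) and all u ∈ [−1/ρ, 1/(1−ρ)], (1+ρu) ln(1+ρu) − ρu ≥ (1−ρ)(ln(1 + ρ/(1−ρ)) − ρ) u². -/
open Real

private lemma pos_denom {x : ℝ} (hx : -1 < x) {s : ℝ} (hs : s ∈ Set.Icc (0:ℝ) 1) :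
    0 < 1 + s * x := by
  obtain ⟨hs0, hs1⟩ := hs
  nlinarith [mul_nonneg hs0 (by linarith : (0:ℝ) ≤ 1 + x)]

private lemma rep (x : ℝ) (hx : -1 < x) :
    (if x = 0 then (1:ℝ)/2 else ((1 + x) * Real.log (1 + x) - x) / x^2)
      = ∫ s in (0:ℝ)..1, (1 - s) / (1 + s * x) := by
  have hcont : ContinuousOn (fun s : ℝ => (1 - s) / (1 + s * x)) (Set.uIcc 0 1) := by
    apply ContinuousOn.div (by fun_prop) (by fun_prop)
    intro s hs
    rw [Set.uIcc_of_le zero_le_one] at hs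
    exact (pos_denom hx hs).ne'
  have hint : IntervalIntegrable (fun s : ℝ => (1 - s)/(1 + s*x)) MeasureTheory.volume 0 1 :=
    hcont.intervalIntegrable
  by_cases h0 : x = 0
  · subst h0
    rw [if_pos rfl]
    have hd : ∀ s ∈ Set.uIcc (0:ℝ) 1,
        HasDerivAt (fun s : ℝ => s - s^2/2) ((1 - s)/(1 + s*0)) s := by
      intro s _
      have h : HasDerivAt (fun s : ℝ => s - s^2/2) (1 - s) s := by
        have := (hasDerivAt_id s).sub ((hasDerivAt_pow 2 s).div_const 2)
        simpa [Pi.sub_def] using this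
      simpa using h
    rw [intervalIntegral.integral_eq_sub_of_hasDerivAt hd hint]
    norm_num
  · rw [if_neg h0]
    have hd : ∀ s ∈ Set.uIcc (0:ℝ) 1,
        HasDerivAt (fun s : ℝ => -(s/x) + ((x+1)/x^2) * Real.log (1 + s*x))
          ((1 - s)/(1 + s*x)) s := by
      intro s hs
      rw [Set.uIcc_of_le zero_le_one] at hs
      have hpos := pos_denom hx hs
      have h1 : HasDerivAt (fun s : ℝ => 1 + s * x) x s := by
        simpa using ((hasDerivAt_id s).mul_const x).const_add 1
      have h2 : HasDerivAt (fun s : ℝ => Real.log (1 + s*x)) (x / (1 + s*x)) s :=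
        h1.log hpos.ne'
      have h3 : HasDerivAt (fun s : ℝ => -(s/x) + ((x+1)/x^2) * Real.log (1 + s*x))
          (-(1/x) + ((x+1)/x^2) * (x / (1 + s*x))) s :=
        (((hasDerivAt_id s).div_const x).neg).add (h2.const_mul _)
      convert h3 using 1
      field_simp
      ring
    rw [intervalIntegral.integral_eq_sub_of_hasDerivAt hd hint]
    norm_num
    field_simp
    ring

private lemma anti :
    AntitoneOn (fun x : ℝ => if x = 0 then (1:ℝ)/2 else ((1 + x) * Real.log (1 + x) - x) / x^2)
      (Set.Ioi (-1 : ℝ)) := by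
  intro x hx y hy hxy
  simp only
  rw [rep x hx, rep y hy]
  have hcont : ∀ z : ℝ, -1 < z →
      IntervalIntegrable (fun s : ℝ => (1 - s)/(1 + s*z)) MeasureTheory.volume 0 1 := by
    intro z hz
    apply ContinuousOn.intervalIntegrable
    apply ContinuousOn.div (by fun_prop) (by fun_prop)
    intro s hs
    rw [Set.uIcc_of_le zero_le_one] at hs
    exact (pos_denom hz hs).ne'
  apply intervalIntegral.integral_mono_on zero_le_one (hcont y hy) (hcont x hx)
  intro s hs
  have h1 := pos_denom hx hs
  have h2 := pos_denom hy hs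
  apply div_le_div_of_nonneg_left (by linarith [hs.2]) h1
  nlinarith [hs.1]

/-- `Φ(x) = (1+x)ln(1+x) − x` satisfies: `Φ(x)/x²` (with value `1/2` at `0`)
is non-increasing on `(−1, ∞)`; consequently for `ρ ∈ (0,1)` and
`u ∈ [−1/ρ, 1/(1−ρ)]`, `(1+ρu)ln(1+ρu) − ρu ≥ (1−ρ)(ln(1 + ρ/(1−ρ)) − ρ)u²`. -/
theorem phi_div_sq_antitone :
    AntitoneOn (fun x : ℝ => if x = 0 then 1/2 else ((1 + x) * Real.log (1 + x) - x) / x^2)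
      (Set.Ioi (-1 : ℝ)) ∧
    ∀ ρ : ℝ, ρ ∈ Set.Ioo (0:ℝ) 1 → ∀ u : ℝ, u ∈ Set.Icc (-(1/ρ)) (1/(1-ρ)) →
      (1 - ρ) * (Real.log (1 + ρ/(1-ρ)) - ρ) * u^2 ≤
        (1 + ρ*u) * Real.log (1 + ρ*u) - ρ*u := by
  refine ⟨anti, ?_⟩
  intro ρ hρ u hu
  obtain ⟨hρ0, hρ1⟩ := hρ
  have h1ρ : 0 < 1 - ρ := by linarith
  set r := ρ / (1 - ρ) with hr
  have hr0 : 0 < r := div_pos hρ0 h1ρ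
  have hrmem : r ∈ Set.Ioi (-1 : ℝ) := by simp; linarith
  -- key algebraic identity
  have hkey : ((1 + r) * Real.log (1 + r) - r) / r^2
      = (1 - ρ) * (Real.log (1 + r) - ρ) / ρ^2 := by
    rw [hr]
    rw [div_eq_div_iff (by positivity) (by positivity)]
    field_simp
    ring
  have hxle : ρ * u ≤ r := by
    have h2 := hu.2
    rw [hr, le_div_iff₀ h1ρ]
    have h3 : u * (1 - ρ) ≤ 1 := (le_div_iff₀ h1ρ).mp h2
    nlinarith [mul_le_mul_of_nonneg_left h3 hρ0.le]
  have hxge : -1 ≤ ρ * u := by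
    have h1 := hu.1
    have : ρ * (-(1/ρ)) ≤ ρ * u := by nlinarith
    calc (-1 : ℝ) = ρ * (-(1/ρ)) := by field_simp
      _ ≤ ρ * u := this
  -- f r = (1-ρ)(L-ρ)/ρ²
  have hfr : (fun x : ℝ => if x = 0 then (1:ℝ)/2 else ((1 + x) * Real.log (1 + x) - x) / x^2) r
      = (1 - ρ) * (Real.log (1 + r) - ρ) / ρ^2 := by
    simp only [if_neg hr0.ne', hkey]
  rcases eq_or_lt_of_le hxge with hx1 | hx1
  · -- boundary case ρ u = -1
    have hfr_le : (1 - ρ) * (Real.log (1 + r) - ρ) / ρ^2 ≤ 1/2 := by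
      have h := anti (by simp : (0:ℝ) ∈ Set.Ioi (-1:ℝ)) hrmem hr0.le
      rw [hfr] at h
      simpa using h
    have hu2 : u^2 = 1/ρ^2 := by
      have hune : u = -(1/ρ) := by
        have : ρ * u = ρ * (-(1/ρ)) := by rw [← hx1]; field_simp
        exact mul_left_cancel₀ hρ0.ne' this
      rw [hune]; ring
    rw [← hx1]
    have hlog : Real.log (1 + -1) = 0 := by norm_num
    rw [hlog]
    have : (1 - ρ) * (Real.log (1 + r) - ρ) * u ^ 2
        = (1 - ρ) * (Real.log (1 + r) - ρ) / ρ^2 := by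
      rw [hu2]; ring
    rw [this]
    linarith
  · -- interior case
    by_cases hu0 : u = 0
    · subst hu0
      simp
    · have hxne : ρ * u ≠ 0 := mul_ne_zero hρ0.ne' hu0
      have hxmem : ρ * u ∈ Set.Ioi (-1 : ℝ) := hx1
      have h := anti hxmem hrmem hxle
      rw [hfr] at h
      simp only [if_neg hxne] at h
      rw [div_le_div_iff₀ (by positivity) (by positivity : (0:ℝ) < (ρ*u)^2)] at h
      nlinarith [sq_nonneg u, mul_pos hρ0 hρ0]
end

section
/- For every ρ ∈ (0,1) and every u ∈ [−1/ρ, 1/(1−ρ)], 1 − √(1 + (2ρ−1)u − ρ(1−ρ)u²) + (ρ − 1/2)u ≤ (max(ρ, 1−ρ)/2) · u². -/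
open Real

lemma aux_half (ρ u : ℝ) (h1 : 1/2 ≤ ρ) (h2 : ρ < 1)
    (hu1 : -(1/ρ) ≤ u) (hu2 : u ≤ 1/(1-ρ)) :
    1 - Real.sqrt (1 + (2*ρ - 1)*u - ρ*(1-ρ)*u^2) + (ρ - 1/2)*u ≤ ρ/2 * u^2 := by
  have hρ0 : (0:ℝ) < ρ := by linarith
  have h1ρ : (0:ℝ) < 1 - ρ := by linarith
  have hρu : -1 ≤ ρ * u := by
    have h := mul_le_mul_of_nonneg_left hu1 hρ0.le
    rw [mul_neg, mul_one_div, div_self hρ0.ne'] at h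
    linarith
  have hu2' : (1-ρ) * u ≤ 1 := by
    have h := mul_le_mul_of_nonneg_left hu2 h1ρ.le
    rw [mul_one_div, div_self h1ρ.ne'] at h
    linarith
  have hQ : 0 ≤ 1 + (2*ρ - 1)*u - ρ*(1-ρ)*u^2 := by
    nlinarith [mul_nonneg (by linarith : (0:ℝ) ≤ 1 + ρ*u) (by linarith : (0:ℝ) ≤ 1 - (1-ρ)*u)]
  have hs : 1 + (ρ - 1/2)*u - ρ/2 * u^2 ≤
      Real.sqrt (1 + (2*ρ - 1)*u - ρ*(1-ρ)*u^2) := by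
    rcases le_or_gt (1 + (ρ - 1/2)*u - ρ/2 * u^2) 0 with hg0 | hg0
    · exact hg0.trans (Real.sqrt_nonneg _)
    · rw [Real.le_sqrt' hg0]
      have hur : ρ * u ≤ 4*ρ - 1 := by
        by_contra hc
        push_neg at hc
        have hu0 : 0 < u := by nlinarith
        nlinarith [mul_lt_mul_of_pos_right hc hu0]
      nlinarith [mul_nonneg (mul_nonneg (sq_nonneg u) (by linarith : (0:ℝ) ≤ ρ*u + 1))
        (by linarith : (0:ℝ) ≤ 4*ρ - 1 - ρ*u)]
  linarith

/-- For `ρ ∈ (0,1)` and `u ∈ [−1/ρ, 1/(1−ρ)]`,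
`1 − √(1 + (2ρ−1)u − ρ(1−ρ)u²) + (ρ − 1/2)u ≤ (max(ρ,1−ρ)/2)·u²`. -/
theorem one_sub_sqrt_quadratic_bound (ρ u : ℝ) (hρ : ρ ∈ Set.Ioo (0:ℝ) 1)
    (hu : u ∈ Set.Icc (-(1/ρ)) (1/(1-ρ))) :
    1 - Real.sqrt (1 + (2*ρ - 1)*u - ρ*(1-ρ)*u^2) + (ρ - 1/2)*u ≤
      max ρ (1 - ρ) / 2 * u^2 := by
  obtain ⟨hρ0, hρ1⟩ := hρ
  obtain ⟨hu1, hu2⟩ := hu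
  rcases le_total (1/2 : ℝ) ρ with h | h
  · rw [max_eq_left (by linarith)]
    exact aux_half ρ u h hρ1 hu1 hu2
  · rw [max_eq_right (by linarith)]
    have h1 : -(1/(1-ρ)) ≤ -u := by linarith
    have h2 : -u ≤ 1/(1-(1-ρ)) := by
      rw [show (1 - (1-ρ)) = ρ by ring]
      linarith
    have key := aux_half (1-ρ) (-u) (by linarith) (by linarith) h1 h2
    have heq : (1 + (2*(1-ρ) - 1)*(-u) - (1-ρ)*(1-(1-ρ))*(-u)^2)
        = (1 + (2*ρ - 1)*u - ρ*(1-ρ)*u^2) := by ring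
    rw [heq] at key
    nlinarith [key]
end

section
/- For any σ ∈ [0,1], ∫₀^σ √(ln(1/δ)) dδ ≤ σ(√(ln(1/σ)) + √π). -/
open Real MeasureTheory

lemma sqrt_add_le_aux {a b : ℝ} (ha : 0 ≤ a) (hb : 0 ≤ b) :
    Real.sqrt (a + b) ≤ Real.sqrt a + Real.sqrt b := by
  have h1 := Real.sq_sqrt ha
  have h2 := Real.sq_sqrt hb
  have h3 := Real.sqrt_nonneg a
  have h4 := Real.sqrt_nonneg b
  have : a + b ≤ (Real.sqrt a + Real.sqrt b) ^ 2 := by nlinarith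
  calc Real.sqrt (a + b) ≤ Real.sqrt ((Real.sqrt a + Real.sqrt b) ^ 2) :=
        Real.sqrt_le_sqrt this
    _ = Real.sqrt a + Real.sqrt b := Real.sqrt_sq (by positivity)

lemma sqrt_log_le_aux {u : ℝ} (hu : 1 ≤ u) :
    Real.sqrt (Real.log u) ≤ Real.sqrt (2 / Real.exp 1) * u ^ ((1:ℝ)/4) := by
  have hu0 : (0:ℝ) < u := lt_of_lt_of_le one_pos hu
  set t := Real.log u with ht
  have ht0 : 0 ≤ t := Real.log_nonneg hu
  -- key : t ≤ (2 / e) * exp (t/2)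
  have key : t ≤ (2 / Real.exp 1) * Real.exp (t / 2) := by
    have h := Real.add_one_le_exp (t / 2 - 1)
    have he : Real.exp (t / 2 - 1) = Real.exp (t / 2) / Real.exp 1 := by
      rw [Real.exp_sub]
    rw [he] at h
    have hexp : (0:ℝ) < Real.exp 1 := Real.exp_pos 1
    have : t / 2 ≤ Real.exp (t / 2) / Real.exp 1 := by linarith
    rw [div_le_div_iff₀ two_pos hexp] at this
    rw [div_mul_eq_mul_div, le_div_iff₀ hexp]
    linarith
  have hrw : Real.exp (t / 2) = u ^ ((1:ℝ)/2) := by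
    rw [Real.rpow_def_of_pos hu0]
    ring_nf
    rw [ht]
  have key2 : t ≤ (2 / Real.exp 1) * u ^ ((1:ℝ)/2) := by rw [← hrw]; exact key
  calc Real.sqrt t ≤ Real.sqrt ((2 / Real.exp 1) * u ^ ((1:ℝ)/2)) :=
        Real.sqrt_le_sqrt key2
    _ = Real.sqrt (2 / Real.exp 1) * Real.sqrt (u ^ ((1:ℝ)/2)) :=
        Real.sqrt_mul (by positivity) _
    _ = Real.sqrt (2 / Real.exp 1) * u ^ ((1:ℝ)/4) := by
        congr 1
        rw [Real.sqrt_eq_rpow, ← Real.rpow_mul hu0.le]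
        norm_num

/-- For `σ ∈ [0,1]`, `∫₀^σ √(ln(1/δ)) dδ ≤ σ(√(ln(1/σ)) + √π)`. -/
theorem integral_sqrt_log_inv_le (σ : ℝ) (hσ : σ ∈ Set.Icc (0:ℝ) 1) :
    ∫ δ in Set.Ioc (0:ℝ) σ, Real.sqrt (Real.log (1/δ)) ≤
      σ * (Real.sqrt (Real.log (1/σ)) + Real.sqrt π) := by
  obtain ⟨hσ0, hσ1⟩ := hσ
  rcases eq_or_lt_of_le hσ0 with h0 | hσpos
  · simp [← h0]
  set c : ℝ := Real.sqrt (2 / Real.exp 1) with hc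
  have hc0 : 0 ≤ c := Real.sqrt_nonneg _
  -- the dominating function
  set g : ℝ → ℝ := fun δ => Real.sqrt (Real.log (1/σ)) + c * σ ^ ((1:ℝ)/4) * δ ^ (-(1:ℝ)/4)
    with hg
  -- pointwise bound on Ioc 0 σ
  have hpt : ∀ δ ∈ Set.Ioc (0:ℝ) σ, Real.sqrt (Real.log (1/δ)) ≤ g δ := by
    intro δ ⟨hδ0, hδσ⟩
    have hσδ : 1 ≤ σ / δ := (one_le_div hδ0).2 hδσ
    have h1σ : 1 ≤ 1 / σ := by rw [le_div_iff₀ hσpos]; linarith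
    have hsplit : Real.log (1/δ) = Real.log (1/σ) + Real.log (σ/δ) := by
      rw [← Real.log_mul (by positivity) (by positivity)]
      congr 1
      field_simp
    rw [hsplit]
    have h2 : Real.sqrt (Real.log (1/σ) + Real.log (σ/δ)) ≤
        Real.sqrt (Real.log (1/σ)) + Real.sqrt (Real.log (σ/δ)) :=
      sqrt_add_le_aux (Real.log_nonneg h1σ) (Real.log_nonneg hσδ)
    refine h2.trans ?_
    have h3 : Real.sqrt (Real.log (σ/δ)) ≤ c * (σ/δ) ^ ((1:ℝ)/4) := sqrt_log_le_aux hσδ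
    have h4 : (σ/δ) ^ ((1:ℝ)/4) = σ ^ ((1:ℝ)/4) * δ ^ (-(1:ℝ)/4) := by
      rw [Real.div_rpow hσpos.le hδ0.le, div_eq_mul_inv, ← Real.rpow_neg hδ0.le]
      norm_num
    rw [h4] at h3
    simp only [hg]
    linarith [h3]
  -- integrability of the rpow part
  have hrpow_int : IntegrableOn (fun δ : ℝ => δ ^ (-(1:ℝ)/4)) (Set.Ioc (0:ℝ) σ) := by
    have := (intervalIntegral.intervalIntegrable_rpow' (a := 0) (b := σ)
      (r := -(1:ℝ)/4) (by norm_num)).1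
    simpa using this
  have hg_int : IntegrableOn g (Set.Ioc (0:ℝ) σ) := by
    apply Integrable.add
    · exact integrableOn_const (by simp [Real.volume_Ioc]) (by simp)
    · exact (hrpow_int.const_mul _)
  -- integrability of the integrand
  have hf_meas : AEStronglyMeasurable (fun δ : ℝ => Real.sqrt (Real.log (1/δ)))
      (volume.restrict (Set.Ioc (0:ℝ) σ)) := by
    apply Measurable.aestronglyMeasurable
    exact (Real.measurable_log.comp (measurable_const.div measurable_id)).sqrt
  have hf_int : IntegrableOn (fun δ : ℝ => Real.sqrt (Real.log (1/δ))) (Set.Ioc (0:ℝ) σ) := by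
    apply Integrable.mono' hg_int hf_meas
    filter_upwards [ae_restrict_mem measurableSet_Ioc] with δ hδ
    rw [Real.norm_eq_abs, abs_of_nonneg (Real.sqrt_nonneg _)]
    exact hpt δ hδ
  -- compare integrals
  have hle : ∫ δ in Set.Ioc (0:ℝ) σ, Real.sqrt (Real.log (1/δ)) ≤
      ∫ δ in Set.Ioc (0:ℝ) σ, g δ :=
    setIntegral_mono_on hf_int hg_int measurableSet_Ioc hpt
  refine hle.trans ?_
  -- compute ∫ g
  have hrpow_val : ∫ δ in Set.Ioc (0:ℝ) σ, δ ^ (-(1:ℝ)/4) = (4/3) * σ ^ ((3:ℝ)/4) := by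
    rw [← intervalIntegral.integral_of_le hσ0]
    rw [integral_rpow (Or.inl (by norm_num))]
    rw [Real.zero_rpow (by norm_num)]
    norm_num
    ring
  have hvol : (volume (Set.Ioc (0:ℝ) σ)).toReal = σ := by
    simp [Real.volume_Ioc, hσ0]
  rw [hg]
  rw [MeasureTheory.integral_add (show Integrable (fun _ : ℝ => Real.sqrt (Real.log (1/σ))) (volume.restrict (Set.Ioc (0:ℝ) σ)) from integrableOn_const (by simp [Real.volume_Ioc]) (by simp))
    (hrpow_int.const_mul _)]
  rw [MeasureTheory.integral_const_mul, hrpow_val, setIntegral_const, Measure.real, hvol, smul_eq_mul]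
  -- now it's algebra plus the numeric bound c * (4/3) ≤ √π
  have hpow : σ ^ ((1:ℝ)/4) * σ ^ ((3:ℝ)/4) = σ := by
    rw [← Real.rpow_add hσpos]
    norm_num
  have hkey : c * σ ^ ((1:ℝ)/4) * ((4/3) * σ ^ ((3:ℝ)/4)) = (c * (4/3)) * σ := by
    calc c * σ ^ ((1:ℝ)/4) * ((4/3) * σ ^ ((3:ℝ)/4))
        = (c * (4/3)) * (σ ^ ((1:ℝ)/4) * σ ^ ((3:ℝ)/4)) := by ring
      _ = (c * (4/3)) * σ := by rw [hpow]
  rw [hkey]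
  have hnum : c * (4/3) ≤ Real.sqrt π := by
    rw [hc]
    have hpi : (2 / Real.exp 1) * (16/9) ≤ π := by
      have he := Real.exp_one_gt_d9
      have hp := Real.pi_gt_d6
      rw [div_mul_eq_mul_div, div_le_iff₀ (Real.exp_pos 1)]
      nlinarith
    have : Real.sqrt (2 / Real.exp 1) * (4/3) =
        Real.sqrt ((2 / Real.exp 1) * (16/9)) := by
      rw [Real.sqrt_mul (by positivity)]
      congr 1
      rw [show (16:ℝ)/9 = (4/3)^2 by norm_num, Real.sqrt_sq (by norm_num)]
    rw [this]
    exact Real.sqrt_le_sqrt hpi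
  have : (c * (4/3)) * σ ≤ Real.sqrt π * σ :=
    mul_le_mul_of_nonneg_right hnum hσ0
  nlinarith [Real.sqrt_nonneg (Real.log (1/σ))]
end

section
/- Let Z be a real random variable and Ψ : ℝ → ℝ a non-decreasing function such that for every event A with P(A) > 0, E[Z·1_A]/P(A) ≤ Ψ(ln(1/P(A))). Then for every x ∈ ℝ, P(Z > Ψ(x)) ≤ e^{−x}. -/
open Real MeasureTheory

/-- If `E[Z·1_A]/P(A) ≤ Ψ(ln(1/P(A)))` for every event `A` with positive
probability, with `Ψ` non-decreasing, then `P(Z > Ψ(x)) ≤ e^{−x}` for every `x`. -/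
theorem deviation_from_conditional_bound {Ω : Type*} [MeasurableSpace Ω]
    (μ : Measure Ω) [IsProbabilityMeasure μ]
    (Z : Ω → ℝ) (hZmeas : Measurable Z) (hZint : Integrable Z μ)
    (Ψ : ℝ → ℝ) (hΨ : Monotone Ψ)
    (h : ∀ A : Set Ω, MeasurableSet A → 0 < μ A →
      (∫ ω in A, Z ω ∂μ) / (μ A).toReal ≤ Ψ (Real.log (1 / (μ A).toReal))) :
    ∀ x : ℝ, (μ {ω | Ψ x < Z ω}).toReal ≤ Real.exp (-x) := by
  intro x
  set c := Ψ x with hc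
  set A : Set Ω := {ω | c < Z ω} with hA
  have hAmeas : MeasurableSet A := measurableSet_lt measurable_const hZmeas
  by_cases hA0 : μ A = 0
  · rw [hA0]
    simpa using (Real.exp_pos (-x)).le
  · have hApos : 0 < μ A := pos_iff_ne_zero.mpr hA0
    set p : ℝ := (μ A).toReal with hp
    have hAfin : μ A ≠ ⊤ := (measure_lt_top μ A).ne
    have hppos : 0 < p := ENNReal.toReal_pos hA0 hAfin
    -- strict inequality: c * p < ∫_A Z
    have hint : IntegrableOn Z A μ := hZint.integrableOn
    have hint' : IntegrableOn (fun ω => Z ω - c) A μ := hint.sub (integrableOn_const (measure_lt_top μ A).ne)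
    have hnn : 0 ≤ᵐ[μ.restrict A] fun ω => Z ω - c := by
      filter_upwards [ae_restrict_mem hAmeas] with ω hω
      exact sub_nonneg.mpr hω.le
    have hsupp : A ⊆ Function.support (fun ω => Z ω - c) := by
      intro ω hω
      exact ne_of_gt (sub_pos.mpr hω)
    have hpos : 0 < ∫ ω in A, (Z ω - c) ∂μ := by
      rw [setIntegral_pos_iff_support_of_nonneg_ae hnn hint']
      calc 0 < μ A := hApos
        _ ≤ μ (Function.support (fun ω => Z ω - c) ∩ A) := by
            apply measure_mono; intro ω hω; exact ⟨hsupp hω, hω⟩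
    have hsub : ∫ ω in A, (Z ω - c) ∂μ = (∫ ω in A, Z ω ∂μ) - p * c := by
      rw [integral_sub hint (integrableOn_const (measure_lt_top μ A).ne)]
      simp [setIntegral_const, smul_eq_mul, measureReal_def, hp]
    have hlt : p * c < ∫ ω in A, Z ω ∂μ := by linarith [hsub ▸ hpos]
    have hcond := h A hAmeas hApos
    have hclt : c < Ψ (Real.log (1 / p)) := by
      have : c < (∫ ω in A, Z ω ∂μ) / p := by
        rw [lt_div_iff₀ hppos]; linarith
      exact lt_of_lt_of_le this hcond
    have hxlt : x < Real.log (1 / p) := by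
      by_contra hcontra
      push_neg at hcontra
      exact absurd (hΨ hcontra) (not_le.mpr hclt)
    have : Real.exp x < 1 / p := (Real.lt_log_iff_exp_lt (by positivity)).mp hxlt
    rw [one_div, lt_inv_comm₀ (Real.exp_pos x) hppos] at this
    rw [Real.exp_neg]
    exact this.le
end

section
/- Let Φ_{μ₁,Σ₁} and Φ_{μ₂,Σ₂} be Gaussian densities on ℝ^D with invertible covariance matrices such that Σ₁⁻¹ − Σ₂⁻¹ is positive definite. Then for every x ∈ ℝ^D, Φ_{μ₁,Σ₁}(x)/Φ_{μ₂,Σ₂}(x) ≤ √(det Σ₂ / det Σ₁) · exp( (1/2) (μ₁ − μ₂)' (Σ₂ − Σ₁)⁻¹ (μ₁ − μ₂) ). -/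
open Real Matrix

/-- The `D`-dimensional Gaussian density with mean `m` and covariance `S`. -/
noncomputable def gaussianDensity {D : ℕ} (m : Fin D → ℝ) (S : Matrix (Fin D) (Fin D) ℝ)
    (x : Fin D → ℝ) : ℝ :=
  (2 * π) ^ (-(D:ℝ)/2) * S.det ^ (-(1:ℝ)/2) *
    Real.exp (-(1/2) * ((x - m) ⬝ᵥ (S⁻¹ *ᵥ (x - m))))

lemma dot_trans {D : ℕ} (M : Matrix (Fin D) (Fin D) ℝ) (a w : Fin D → ℝ) :
    a ⬝ᵥ M *ᵥ w = w ⬝ᵥ Mᵀ *ᵥ a := by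
  rw [Matrix.dotProduct_mulVec, ← Matrix.mulVec_transpose, dotProduct_comm]

lemma dot_symm {D : ℕ} {M : Matrix (Fin D) (Fin D) ℝ} (h : Mᵀ = M) (a w : Fin D → ℝ) :
    a ⬝ᵥ M *ᵥ w = w ⬝ᵥ M *ᵥ a := by
  rw [dot_trans, h]

/-- If `S1⁻¹ − S2⁻¹` is positive definite, then for all `x`,
`Φ_{μ₁,S1}(x)/Φ_{μ₂,S2}(x) ≤ √(det S2/det S1) exp((1/2)(μ₁−μ₂)'(S2−S1)⁻¹(μ₁−μ₂))`. -/
theorem gaussian_ratio_bound {D : ℕ} (μ₁ μ₂ : Fin D → ℝ)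
    (S1 S2 : Matrix (Fin D) (Fin D) ℝ)
    (h₁ : S1.PosDef) (h₂ : S2.PosDef) (hdiff : (S1⁻¹ - S2⁻¹).PosDef)
    (x : Fin D → ℝ) :
    gaussianDensity μ₁ S1 x / gaussianDensity μ₂ S2 x ≤
      Real.sqrt (S2.det / S1.det) *
        Real.exp ((1/2) * ((μ₁ - μ₂) ⬝ᵥ ((S2 - S1)⁻¹ *ᵥ (μ₁ - μ₂)))) := by
  set A := S1⁻¹ with hAdef
  set B := S2⁻¹ with hBdef
  set Δ := A - B with hΔdef
  set C := Δ⁻¹ with hCdef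
  -- symmetry facts
  have hAs : Aᵀ = A := (h₁.inv).isHermitian.eq
  have hBs : Bᵀ = B := (h₂.inv).isHermitian.eq
  have hΔs : Δᵀ = Δ := hdiff.isHermitian.eq
  have hCs : Cᵀ = C := by
    rw [hCdef, Matrix.transpose_nonsing_inv, hΔs]
  -- invertibility
  have hdet1 : IsUnit S1.det := isUnit_iff_ne_zero.mpr h₁.det_pos.ne'
  have hdet2 : IsUnit S2.det := isUnit_iff_ne_zero.mpr h₂.det_pos.ne'
  have hdetΔ : IsUnit Δ.det := isUnit_iff_ne_zero.mpr hdiff.det_pos.ne'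
  have hΔC : Δ * C = 1 := Matrix.mul_nonsing_inv _ hdetΔ
  have hCΔ : C * Δ = 1 := Matrix.nonsing_inv_mul _ hdetΔ
  -- (S2 - S1)⁻¹ = A * C * B
  have h21 : S2 - S1 = S2 * Δ * S1 := by
    rw [hΔdef, Matrix.mul_sub, Matrix.sub_mul, Matrix.mul_assoc S2 A S1,
      hAdef, Matrix.nonsing_inv_mul _ hdet1, Matrix.mul_one,
      hBdef, Matrix.mul_nonsing_inv _ hdet2, Matrix.one_mul]
  have hMeq : (S2 - S1)⁻¹ = A * C * B := by
    rw [h21, Matrix.mul_inv_rev, Matrix.mul_inv_rev]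
    rw [← hAdef, ← hBdef, ← hCdef, Matrix.mul_assoc]
  set M := A * C * B with hMdef
  have hMT : Mᵀ = B * C * A := by
    rw [hMdef, Matrix.transpose_mul, Matrix.transpose_mul, hAs, hBs, hCs, Matrix.mul_assoc]
  -- algebraic matrix identities
  have hCA : C * A = 1 + C * B := by
    have h : C * A - C * B = 1 := by rw [← Matrix.mul_sub, ← hΔdef, hCΔ]
    rw [← h]; abel
  have hACA : A * C * A = A + M := by
    rw [Matrix.mul_assoc, hCA, Matrix.mul_add, Matrix.mul_one, hMdef, Matrix.mul_assoc]
  have hBCB : B * C * B = B * C * A - B := by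
    rw [Matrix.mul_assoc, Matrix.mul_assoc, hCA, Matrix.mul_add, Matrix.mul_one]
    abel
  have hS1t : S1ᵀ = S1 := h₁.isHermitian.eq
  have hS2t : S2ᵀ = S2 := h₂.isHermitian.eq
  have hMs : Mᵀ = M := by
    rw [← hMeq, Matrix.transpose_nonsing_inv, Matrix.transpose_sub, hS1t, hS2t]
  set d := μ₁ - μ₂ with hd
  set v := A *ᵥ μ₁ - B *ᵥ μ₂ with hv
  set u := x - C *ᵥ v with hu
  -- expansions
  have e1 : (x - μ₁) ⬝ᵥ A *ᵥ (x - μ₁)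
      = x ⬝ᵥ A *ᵥ x - 2 * (x ⬝ᵥ A *ᵥ μ₁) + μ₁ ⬝ᵥ A *ᵥ μ₁ := by
    simp only [Matrix.mulVec_sub, dotProduct_sub, sub_dotProduct]
    rw [dot_symm hAs μ₁ x]; ring
  have e2 : (x - μ₂) ⬝ᵥ B *ᵥ (x - μ₂)
      = x ⬝ᵥ B *ᵥ x - 2 * (x ⬝ᵥ B *ᵥ μ₂) + μ₂ ⬝ᵥ B *ᵥ μ₂ := by
    simp only [Matrix.mulVec_sub, dotProduct_sub, sub_dotProduct]
    rw [dot_symm hBs μ₂ x]; ring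
  have hΔCv : Δ *ᵥ (C *ᵥ v) = v := by
    rw [Matrix.mulVec_mulVec, hΔC, Matrix.one_mulVec]
  have estep1 : u ⬝ᵥ Δ *ᵥ u = x ⬝ᵥ Δ *ᵥ x - 2 * (x ⬝ᵥ v) + v ⬝ᵥ C *ᵥ v := by
    rw [hu]
    simp only [Matrix.mulVec_sub, dotProduct_sub, sub_dotProduct, hΔCv]
    rw [dot_symm hΔs (C *ᵥ v) x, hΔCv, dotProduct_comm (C *ᵥ v) v]
    ring
  have estep_xΔ : x ⬝ᵥ Δ *ᵥ x = x ⬝ᵥ A *ᵥ x - x ⬝ᵥ B *ᵥ x := by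
    rw [hΔdef]
    simp only [Matrix.sub_mulVec, dotProduct_sub]
  have estep_xv : x ⬝ᵥ v = x ⬝ᵥ A *ᵥ μ₁ - x ⬝ᵥ B *ᵥ μ₂ := by
    rw [hv, dotProduct_sub]
  have hAflip : ∀ w, (A *ᵥ μ₁) ⬝ᵥ w = μ₁ ⬝ᵥ A *ᵥ w := fun w => by
    rw [dotProduct_comm, dot_symm hAs]
  have hBflip : ∀ w, (B *ᵥ μ₂) ⬝ᵥ w = μ₂ ⬝ᵥ B *ᵥ w := fun w => by
    rw [dotProduct_comm, dot_symm hBs]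
  have hBCA : ∀ a b : Fin D → ℝ, a ⬝ᵥ (B * C * A) *ᵥ b = b ⬝ᵥ M *ᵥ a := fun a b => by
    rw [dot_trans, ← hMT, Matrix.transpose_transpose]
  have estep_vCv : v ⬝ᵥ C *ᵥ v
      = (μ₁ ⬝ᵥ A *ᵥ μ₁ + μ₁ ⬝ᵥ M *ᵥ μ₁) - 2 * (μ₁ ⬝ᵥ M *ᵥ μ₂)
        + (μ₂ ⬝ᵥ M *ᵥ μ₂ - μ₂ ⬝ᵥ B *ᵥ μ₂) := by
    rw [hv]
    simp only [Matrix.mulVec_sub, dotProduct_sub, sub_dotProduct, hAflip, hBflip,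
      Matrix.mulVec_mulVec, ← Matrix.mul_assoc]
    rw [hACA, hBCB]
    simp only [Matrix.add_mulVec, Matrix.sub_mulVec, dotProduct_add, dotProduct_sub]
    rw [hBCA μ₂ μ₁, hBCA μ₂ μ₂]
    ring
  have estep_d : d ⬝ᵥ M *ᵥ d
      = μ₁ ⬝ᵥ M *ᵥ μ₁ - 2 * (μ₁ ⬝ᵥ M *ᵥ μ₂) + μ₂ ⬝ᵥ M *ᵥ μ₂ := by
    rw [hd]
    simp only [Matrix.mulVec_sub, dotProduct_sub, sub_dotProduct]
    rw [dot_symm hMs μ₂ μ₁]; ring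
  have key : ((x - μ₁) ⬝ᵥ A *ᵥ (x - μ₁)) - ((x - μ₂) ⬝ᵥ B *ᵥ (x - μ₂)) + d ⬝ᵥ M *ᵥ d
      = u ⬝ᵥ Δ *ᵥ u := by
    rw [e1, e2, estep1, estep_xΔ, estep_xv, estep_vCv, estep_d]; ring
  have hnonneg : 0 ≤ u ⬝ᵥ Δ *ᵥ u := by simpa using hdiff.posSemidef.dotProduct_mulVec_nonneg u
  -- analytic part
  have hP : (0:ℝ) < (2 * π) ^ (-(D:ℝ)/2) :=
    Real.rpow_pos_of_pos (by positivity) _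
  have hq : -(1/2) * ((x - μ₁) ⬝ᵥ A *ᵥ (x - μ₁)) - (-(1/2) * ((x - μ₂) ⬝ᵥ B *ᵥ (x - μ₂)))
      ≤ (1/2) * (d ⬝ᵥ M *ᵥ d) := by
    nlinarith [key, hnonneg]
  have hs : S1.det ^ (-(1:ℝ)/2) / S2.det ^ (-(1:ℝ)/2) = Real.sqrt (S2.det / S1.det) := by
    rw [Real.sqrt_eq_rpow, Real.div_rpow h₂.det_pos.le h₁.det_pos.le]
    rw [show (-(1:ℝ)/2) = -(1/2) by norm_num, Real.rpow_neg h₁.det_pos.le,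
      Real.rpow_neg h₂.det_pos.le, inv_div_inv]
  rw [gaussianDensity, gaussianDensity, hMeq, ← hAdef, ← hBdef]
  rw [show ∀ a b c e f : ℝ, (a * b * c) / (a * e * f) = (a * (b * c)) / (a * (e * f))
    from fun _ _ _ _ _ => by ring, mul_div_mul_left _ _ hP.ne', mul_div_mul_comm,
    ← Real.exp_sub, hs]
  exact mul_le_mul_of_nonneg_left (Real.exp_le_exp.mpr hq) (Real.sqrt_nonneg _)
end

section
/- Let A be a D×D diagonal positive matrix with det A = 1 and λ₋ ≤ A_{i,i} ≤ λ₊ for all i, where 0 < λ₋ ≤ λ₊. Then there exists a diagonal matrix Ã with det Ã = 1, λ₋ ≤ Ã_{i,i} ≤ (1+δ)λ₊ for all i, whose first D−1 diagonal entries lie in the geometric grid {λ₋(1+δ)^g : g ∈ ℕ}, such that |Ã_{i,i}^{−1} − A_{i,i}^{−1}| ≤ δ λ₋^{−1} for every 1 ≤ i ≤ D. -/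
open Real Matrix

noncomputable def gridProd (c : ℝ) (r : ℕ → ℝ) : ℕ → ℝ
  | 0 => 1
  | n+1 => if c⁻¹ < gridProd c r n * r n then gridProd c r n * r n
           else gridProd c r n * r n * c

noncomputable def gridVal (c : ℝ) (r a : ℕ → ℝ) (n : ℕ) : ℝ :=
  if c⁻¹ < gridProd c r n * r n then a n * r n else a n * r n * c

lemma gridProd_invariant {c : ℝ} (hc : 1 < c) {r : ℕ → ℝ}
    (hr : ∀ n, c⁻¹ < r n ∧ r n ≤ 1) :
    ∀ n, c⁻¹ < gridProd c r n ∧ gridProd c r n ≤ 1 := by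
  have hc0 : (0:ℝ) < c := lt_trans one_pos hc
  have hci : c⁻¹ < 1 := inv_lt_one_of_one_lt₀ hc
  have hci0 : (0:ℝ) < c⁻¹ := inv_pos.mpr hc0
  intro n
  induction n with
  | zero => simpa [gridProd] using hci
  | succ n ih =>
    obtain ⟨hP1, hP2⟩ := ih
    obtain ⟨hr1, hr2⟩ := hr n
    have hr0 : 0 < r n := lt_trans hci0 hr1
    have hP0 : 0 < gridProd c r n := lt_trans hci0 hP1
    by_cases h : c⁻¹ < gridProd c r n * r n
    · rw [gridProd, if_pos h]
      exact ⟨h, mul_le_one₀ hP2 hr0.le hr2⟩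
    · rw [gridProd, if_neg h]
      push_neg at h
      constructor
      · have h1 : c⁻¹ * c⁻¹ < gridProd c r n * r n := by
          calc c⁻¹ * c⁻¹ < gridProd c r n * c⁻¹ := mul_lt_mul_of_pos_right hP1 hci0
            _ < gridProd c r n * r n := mul_lt_mul_of_pos_left hr1 hP0
        calc c⁻¹ = c⁻¹ * c⁻¹ * c := by field_simp
          _ < gridProd c r n * r n * c := mul_lt_mul_of_pos_right h1 hc0
      · calc gridProd c r n * r n * c ≤ c⁻¹ * c := mul_le_mul_of_nonneg_right h hc0.le
          _ = 1 := inv_mul_cancel₀ (ne_of_gt hc0)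

lemma gridProd_succ (c : ℝ) (r a : ℕ → ℝ) (n : ℕ) :
    gridProd c r (n+1) * a n = gridProd c r n * gridVal c r a n := by
  by_cases h : c⁻¹ < gridProd c r n * r n
  · rw [gridProd, gridVal, if_pos h, if_pos h]; ring
  · rw [gridProd, gridVal, if_neg h, if_neg h]; ring

lemma gridVal_prod {c : ℝ} {r a : ℕ → ℝ} :
    ∀ n, ∏ i ∈ Finset.range n, gridVal c r a i
      = gridProd c r n * ∏ i ∈ Finset.range n, a i := by
  intro n
  induction n with
  | zero => simp [gridProd]
  | succ n ih =>
    rw [Finset.prod_range_succ, Finset.prod_range_succ, ih]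
    have h := gridProd_succ c r a n
    linear_combination -(∏ i ∈ Finset.range n, a i) * h

lemma inv_approx_aux {δ lm a t : ℝ} (hδ : 0 < δ) (hlm : 0 < lm) (ha : lm ≤ a)
    (h1 : a ≤ t * (1+δ)) (h2 : t ≤ a * (1+δ)) : |t⁻¹ - a⁻¹| ≤ δ * lm⁻¹ := by
  have ha0 : 0 < a := lt_of_lt_of_le hlm ha
  have ht0 : 0 < t := by nlinarith
  have hua : 1 ≤ a * lm⁻¹ := by
    rw [← div_eq_mul_inv, le_div_iff₀ hlm]; linarith
  have e1 : t⁻¹ - a⁻¹ = (a - t)/(a*t) := by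
    rw [inv_eq_one_div, inv_eq_one_div, div_sub_div _ _ ht0.ne' ha0.ne',
      one_mul, mul_one, mul_comm]
  have e2 : a⁻¹ - t⁻¹ = (t - a)/(a*t) := by
    rw [inv_eq_one_div, inv_eq_one_div, div_sub_div _ _ ha0.ne' ht0.ne',
      one_mul, mul_one]
  rw [abs_sub_le_iff]
  constructor
  · rw [e1, div_le_iff₀ (by positivity)]
    nlinarith [mul_nonneg (mul_nonneg ht0.le hδ.le) (sub_nonneg.mpr hua)]
  · rw [e2, div_le_iff₀ (by positivity)]
    rcases le_or_gt t a with h | h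
    · nlinarith [mul_pos (mul_pos hδ ha0) ht0, mul_nonneg hlm.le ht0.le]
    · have h' : 1 ≤ t * lm⁻¹ :=
        le_trans hua (mul_le_mul_of_nonneg_right h.le (inv_nonneg.mpr hlm.le))
      nlinarith [mul_nonneg (mul_nonneg hδ.le ha0.le) (sub_nonneg.mpr h')]


/-- every diagonal positive matrix `A` with `det A = 1` and diagonal
entries in `[λ₋, λ₊]` can be approximated by a diagonal matrix `Ã` with `det Ã = 1`,
entries in `[λ₋, (1+δ)λ₊]`, first `D−1` entries on the geometric grid
`{λ₋(1+δ)^g : g ∈ ℕ}`, and `|Ã_{i,i}⁻¹ − A_{i,i}⁻¹| ≤ δλ₋⁻¹` for all `i`. -/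
theorem eigenvalue_grid_approx (D : ℕ) (hD : 2 ≤ D) (δ lm lp : ℝ)
    (hδ : 0 < δ) (hlm : 0 < lm) (hl : lm ≤ lp)
    (A : Matrix (Fin D) (Fin D) ℝ) (hdiag : A.IsDiag) (hdet : A.det = 1)
    (hbd : ∀ i, lm ≤ A i i ∧ A i i ≤ lp) :
    ∃ At : Matrix (Fin D) (Fin D) ℝ, At.IsDiag ∧ At.det = 1 ∧
      (∀ i, lm ≤ At i i ∧ At i i ≤ (1+δ) * lp) ∧
      (∀ i : Fin D, (i : ℕ) < D - 1 → ∃ g : ℕ, At i i = lm * (1+δ)^g) ∧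
      (∀ i, |(At i i)⁻¹ - (A i i)⁻¹| ≤ δ * lm⁻¹) := by
  set c : ℝ := 1 + δ with hc_def
  have hc : 1 < c := by rw [hc_def]; linarith
  have hc0 : (0:ℝ) < c := lt_trans one_pos hc
  set a : ℕ → ℝ := fun n => if h : n < D then A ⟨n,h⟩ ⟨n,h⟩ else lm with ha_def
  have haA : ∀ i : Fin D, a (i:ℕ) = A i i := by
    intro i
    simp only [ha_def, i.isLt, dif_pos]
  have halm : ∀ n, lm ≤ a n := by
    intro n
    by_cases h : n < D
    · rw [ha_def]; simp only [h, dif_pos]; exact (hbd ⟨n,h⟩).1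
    · rw [ha_def]; simp [h]
  have halp : ∀ i : Fin D, a (i:ℕ) ≤ lp := by
    intro i; rw [haA i]; exact (hbd i).2
  have ha0 : ∀ n, 0 < a n := fun n => lt_of_lt_of_le hlm (halm n)
  set g : ℕ → ℕ := fun n => ⌊Real.logb c (a n / lm)⌋₊ with hg_def
  set d : ℕ → ℝ := fun n => lm * c ^ g n with hd_def
  have hdle : ∀ n, d n ≤ a n ∧ a n < d n * c := by
    intro n
    have hx0 : 0 ≤ Real.logb c (a n / lm) :=
      Real.logb_nonneg hc ((one_le_div hlm).mpr (halm n))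
    have hxe : c ^ Real.logb c (a n / lm) = a n / lm :=
      Real.rpow_logb hc0 (ne_of_gt hc) (div_pos (ha0 n) hlm)
    constructor
    · have h1 : (c:ℝ) ^ ((g n : ℕ) : ℝ) ≤ c ^ Real.logb c (a n / lm) :=
        Real.rpow_le_rpow_of_exponent_le hc.le (Nat.floor_le hx0)
      rw [Real.rpow_natCast, hxe] at h1
      calc d n = lm * c ^ g n := by rw [hd_def]
        _ ≤ lm * (a n / lm) := mul_le_mul_of_nonneg_left h1 hlm.le
        _ = a n := by field_simp
    · have h2 : c ^ Real.logb c (a n / lm) < c ^ (((g n : ℕ) : ℝ) + 1) :=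
        Real.rpow_lt_rpow_of_exponent_lt hc (Nat.lt_floor_add_one _)
      rw [hxe] at h2
      have he : c ^ (((g n : ℕ) : ℝ) + 1) = c ^ g n * c := by
        rw [Real.rpow_add hc0, Real.rpow_natCast, Real.rpow_one]
      rw [he] at h2
      calc a n = lm * (a n / lm) := by field_simp
        _ < lm * (c ^ g n * c) := mul_lt_mul_of_pos_left h2 hlm
        _ = d n * c := by rw [hd_def]; ring
  set r : ℕ → ℝ := fun n => d n / a n with hr_def
  have hd0 : ∀ n, 0 < d n := by
    intro n; rw [hd_def]; positivity
  have hrb : ∀ n, c⁻¹ < r n ∧ r n ≤ 1 := by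
    intro n
    obtain ⟨h1, h2⟩ := hdle n
    constructor
    · rw [hr_def, lt_div_iff₀ (ha0 n)]
      have := mul_lt_mul_of_pos_right h2 (inv_pos.mpr hc0)
      rw [mul_assoc, mul_inv_cancel₀ hc0.ne', mul_one] at this
      linarith [this]
    · rw [hr_def, div_le_one (ha0 n)]; exact h1
  have hP := gridProd_invariant hc hrb
  have hP0 : ∀ n, 0 < gridProd c r n :=
    fun n => lt_trans (inv_pos.mpr hc0) (hP n).1
  have hval : ∀ n, gridVal c r a n = d n ∨ gridVal c r a n = d n * c := by
    intro n
    by_cases h : c⁻¹ < gridProd c r n * r n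
    · left; rw [gridVal, if_pos h, hr_def, mul_div_cancel₀ _ (ha0 n).ne']
    · right; rw [gridVal, if_neg h, hr_def, mul_div_cancel₀ _ (ha0 n).ne']
  -- bounds on the chosen values
  have hvlb : ∀ n, lm ≤ gridVal c r a n := by
    intro n
    have h1 : lm ≤ d n := by
      rw [hd_def]
      exact le_mul_of_one_le_right hlm.le (one_le_pow₀ hc.le)
    rcases hval n with hv | hv <;> rw [hv]
    · exact h1
    · nlinarith [hd0 n]
  have hvub : ∀ i : Fin D, gridVal c r a (i:ℕ) ≤ c * lp := by
    intro i
    have h1 : d (i:ℕ) ≤ lp := le_trans (hdle _).1 (halp i)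
    rcases hval (i:ℕ) with hv | hv <;> rw [hv]
    · nlinarith [hd0 (i:ℕ), lt_of_lt_of_le hlm (le_trans (halm _) (halp i))]
    · nlinarith
  have hvrat : ∀ n, a n ≤ gridVal c r a n * c ∧ gridVal c r a n ≤ a n * c := by
    intro n
    obtain ⟨h1, h2⟩ := hdle n
    rcases hval n with hv | hv <;> rw [hv]
    · exact ⟨h2.le, by nlinarith [ha0 n]⟩
    · exact ⟨by nlinarith [hd0 n], by nlinarith [hc0]⟩
  set P : ℝ := gridProd c r (D-1) with hP_def
  have hPl : c⁻¹ < P := (hP (D-1)).1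
  have hPu : P ≤ 1 := (hP (D-1)).2
  have hPpos : 0 < P := hP0 (D-1)
  -- the approximant
  refine ⟨Matrix.diagonal (fun i : Fin D =>
    if (i:ℕ) < D - 1 then gridVal c r a (i:ℕ) else a (i:ℕ) / P),
    Matrix.isDiag_diagonal _, ?_, ?_, ?_, ?_⟩
  · -- determinant
    rw [Matrix.det_diagonal]
    have hA : A = Matrix.diagonal (fun i => A i i) := by
      ext i j
      by_cases h : i = j
      · subst h; simp
      · rw [Matrix.diagonal_apply_ne _ h]; exact hdiag h
    have hdet2 : ∏ i : Fin D, A i i = 1 := by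
      have h' : (Matrix.diagonal (fun i => A i i)).det = 1 := by rw [← hA]; exact hdet
      rwa [Matrix.det_diagonal] at h'
    have hprodA : ∏ n ∈ Finset.range D, a n = 1 := by
      rw [← Fin.prod_univ_eq_prod_range a D]
      rw [Finset.prod_congr rfl (fun (i : Fin D) _ => haA i)]
      exact hdet2
    have hD1 : D - 1 + 1 = D := by omega
    have key : ∏ i : Fin D, (if (i:ℕ) < D - 1 then gridVal c r a (i:ℕ)
        else a (i:ℕ) / P)
        = ∏ n ∈ Finset.range D, (if n < D - 1 then gridVal c r a n else a n / P) :=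
      Fin.prod_univ_eq_prod_range (fun n => if n < D - 1 then gridVal c r a n else a n / P) D
    have hstep := Finset.prod_range_succ
      (fun n => if n < D - 1 then gridVal c r a n else a n / P) (D-1)
    rw [hD1] at hstep
    have h2 : ∏ n ∈ Finset.range (D-1), (if n < D - 1 then gridVal c r a n
        else a n / P) = ∏ n ∈ Finset.range (D-1), gridVal c r a n := by
      refine Finset.prod_congr rfl (fun n hn => ?_)
      rw [if_pos (Finset.mem_range.mp hn)]
    rw [key, hstep, h2, if_neg (lt_irrefl (D-1)), gridVal_prod (D-1), ← hP_def]
    have h3 := Finset.prod_range_succ a (D-1)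
    rw [hD1] at h3
    rw [hprodA] at h3
    field_simp
    nlinarith [h3, hPpos]
  · -- entry bounds
    intro i
    rw [Matrix.diagonal_apply_eq]
    by_cases h : (i:ℕ) < D - 1
    · rw [if_pos h]
      exact ⟨hvlb _, hvub i⟩
    · rw [if_neg h]
      have hb1 : a (i:ℕ) ≤ a (i:ℕ) / P := by
        rw [le_div_iff₀ hPpos]; nlinarith [ha0 (i:ℕ)]
      have hb2 : a (i:ℕ) / P ≤ a (i:ℕ) * c := by
        rw [div_le_iff₀ hPpos]
        have h1 : a (i:ℕ) / P < a (i:ℕ) / c⁻¹ :=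
          div_lt_div_of_pos_left (ha0 _) (inv_pos.mpr hc0) hPl
        simp only [div_eq_mul_inv, inv_inv] at h1
        rw [← div_le_iff₀ hPpos]
        exact h1.le
      have hb3 : a (i:ℕ) * c ≤ c * lp := by
        rw [mul_comm]; exact mul_le_mul_of_nonneg_left (halp i) hc0.le
      exact ⟨le_trans (halm _) hb1, le_trans hb2 hb3⟩
  · -- grid membership
    intro i hi
    rw [Matrix.diagonal_apply_eq, if_pos hi]
    rcases hval (i:ℕ) with hv | hv
    · exact ⟨g (i:ℕ), by rw [hv, hd_def]⟩
    · exact ⟨g (i:ℕ) + 1, by rw [hv, hd_def, pow_succ]; ring⟩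
  · -- inverse approximation
    intro i
    rw [Matrix.diagonal_apply_eq, ← haA i]
    by_cases h : (i:ℕ) < D - 1
    · rw [if_pos h]
      obtain ⟨h1, h2⟩ := hvrat (i:ℕ)
      exact inv_approx_aux hδ hlm (halm _) h1 h2
    · rw [if_neg h]
      refine inv_approx_aux hδ hlm (halm _) ?_ ?_
      · rw [div_mul_eq_mul_div, le_div_iff₀ hPpos]
        nlinarith [ha0 (i:ℕ), mul_pos (ha0 (i:ℕ)) hc0]
      · have h1 : a (i:ℕ) / P < a (i:ℕ) / c⁻¹ :=
          div_lt_div_of_pos_left (ha0 _) (inv_pos.mpr hc0) hPl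
        simp only [div_eq_mul_inv, inv_inv] at h1
        exact h1.le
end
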